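/- arXiv:2012.07837 — 2 statements merged into one kernel-verified Lean document; each statement's English description precedes it below -/
import Mathlib

section
/- Let M > 0, let N ≥ 2 be an integer, and let r₀ ∈ (0,1) satisfy r₀ − 1 + 2M(2r₀ − 1 + 2(1−r₀)ln(1−r₀) − Σ_{n=2}^{N−1} r₀ⁿ/(n(n−1)) + 2 ln 2) = 0. Then for the function f_M(z) = z + 2M Σ_{n=2}^∞ zⁿ/(n(n−1)) (whose coefficients are a_n = 2M/(n(n−1)), b_n = 0), equality holds: |f_M(r₀)| + Σ_{n=N}^∞ (2M/(n(n−1))) r₀ⁿ = 1 + 2M(1 − 2 ln 2) = d(f_M(0), ∂f_M(𝔻)). -/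
open Filter MeasureTheory Topology

/-- Euclidean distance from `f 0` to the boundary of `f(𝔻)`, defined as
`liminf_{|z| → 1⁻} |f z - f 0|`. -/
noncomputable def bdyDist (f : ℂ → ℂ) : ℝ :=
  Filter.liminf (fun z : ℂ => ‖f z - f 0‖)
    (Filter.comap (fun z : ℂ => ‖z‖) (nhdsWithin 1 (Set.Iio 1)))

/-- `f = h + conj g` belongs to the class `P⁰_H(M)`:  `h z = z + ∑_{n≥2} a n * z^n`,
`g z = ∑_{n≥2} b n * z^n` on the unit disk, and `Re (z h''(z)) > -M + |z g''(z)|` there. -/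
def PH0 (M : ℝ) (a b : ℕ → ℂ) (h g : ℂ → ℂ) : Prop :=
  (∀ z ∈ Metric.ball (0 : ℂ) 1,
      HasSum (fun n : ℕ => a (n + 2) * z ^ (n + 2)) (h z - z)) ∧
  (∀ z ∈ Metric.ball (0 : ℂ) 1,
      HasSum (fun n : ℕ => b (n + 2) * z ^ (n + 2)) (g z)) ∧
  (∀ z ∈ Metric.ball (0 : ℂ) 1,
      -M + ‖z * deriv (deriv g) z‖ < (z * deriv (deriv h) z).re)

/-- The extremal function `f_M z = z + 2M ∑_{n≥2} z^n/(n(n-1))`. -/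
noncomputable def fM (M : ℝ) : ℂ → ℂ :=
  fun z => z + 2 * (M : ℂ) * ∑' n : ℕ, z ^ (n + 2) / (((n : ℂ) + 2) * ((n : ℂ) + 1))

private lemma hasSum_S {z : ℂ} (hz : ‖z‖ < 1) :
    HasSum (fun n : ℕ => z ^ (n + 2) / (((n : ℂ) + 2) * ((n : ℂ) + 1)))
      (z + (1 - z) * Complex.log (1 - z)) := by
  have H := Complex.hasSum_taylorSeries_neg_log hz
  have H1 : HasSum (fun n : ℕ => z ^ (n + 1) / ((n : ℂ) + 1)) (-Complex.log (1 - z)) := by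
    have := (hasSum_nat_add_iff' (f := fun n : ℕ => z ^ n / (n : ℂ)) 1).mpr H
    simpa using this
  have H2 : HasSum (fun n : ℕ => z ^ (n + 2) / ((n : ℂ) + 2)) (-Complex.log (1 - z) - z) := by
    have h := (hasSum_nat_add_iff' (f := fun n : ℕ => z ^ (n + 1) / ((n : ℂ) + 1)) 1).mpr H1
    have he : (fun n : ℕ => z ^ (n + 1 + 1) / ((n : ℂ) + 1 + 1))
        = fun n : ℕ => z ^ (n + 2) / ((n : ℂ) + 2) := by
      funext n; ring_nf
    simp only [Nat.cast_add, Nat.cast_one] at h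
    rw [he] at h
    simpa using h
  have H3 : HasSum (fun n : ℕ => z * (z ^ (n + 1) / ((n : ℂ) + 1))) (z * -Complex.log (1 - z)) :=
    H1.mul_left z
  have := H3.sub H2
  convert this using 1
  · rfl
  · funext n
    have h1 : ((n : ℂ) + 1) ≠ 0 := Nat.cast_add_one_ne_zero n
    have h2 : ((n : ℂ) + 2) ≠ 0 := by
      have : ((n : ℂ) + 2) = ((n + 2 : ℕ) : ℂ) := by push_cast; ring
      rw [this]
      exact_mod_cast Nat.succ_ne_zero (n + 1)
    field_simp
    ring
  · ring

private lemma fM_eq {M : ℝ} {z : ℂ} (hz : ‖z‖ < 1) :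
    fM M z = z + 2 * (M : ℂ) * (z + (1 - z) * Complex.log (1 - z)) := by
  unfold fM
  rw [(hasSum_S hz).tsum_eq]

private lemma fM_zero (M : ℝ) : fM M 0 = 0 := by
  rw [fM_eq (by norm_num)]
  simp

private lemma hasDerivAt_fM (M : ℝ) {z : ℂ} (hz : ‖z‖ < 1) :
    HasDerivAt (fM M) (1 - 2 * (M : ℂ) * Complex.log (1 - z)) z := by
  have hz1 : (1 : ℂ) - z ≠ 0 := by
    intro h
    have : z = 1 := by linear_combination -h
    rw [this] at hz; norm_num at hz
  have hs : (1 - z) ∈ Complex.slitPlane := by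
    rw [Complex.mem_slitPlane_iff]
    left
    simp only [Complex.sub_re, Complex.one_re]
    have : z.re < 1 := lt_of_le_of_lt (Complex.re_le_norm z) hz
    linarith
  have hlog : HasDerivAt (fun y : ℂ => Complex.log (1 - y)) (-(1 - z)⁻¹) z := by
    have h1 : HasDerivAt (fun y : ℂ => 1 - y) (-1 : ℂ) z := (hasDerivAt_id z).const_sub 1
    simpa [Function.comp_def] using (Complex.hasDerivAt_log hs).comp z h1
  have h2 : HasDerivAt (fun y : ℂ => (1 - y) * Complex.log (1 - y))
      ((-1) * Complex.log (1 - z) + (1 - z) * -(1 - z)⁻¹) z :=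
    ((hasDerivAt_id z).const_sub 1).mul hlog
  have hF : HasDerivAt (fun y : ℂ => y + 2 * (M : ℂ) * (y + (1 - y) * Complex.log (1 - y)))
      (1 + 2 * (M : ℂ) * (1 + ((-1) * Complex.log (1 - z) + (1 - z) * -(1 - z)⁻¹))) z :=
    (hasDerivAt_id z).add (((hasDerivAt_id z).add h2).const_mul (2 * (M : ℂ)))
  have hval : (1 : ℂ) + 2 * (M : ℂ) * (1 + ((-1) * Complex.log (1 - z) + (1 - z) * -(1 - z)⁻¹))
      = 1 - 2 * (M : ℂ) * Complex.log (1 - z) := by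
    field_simp
    ring
  rw [hval] at hF
  apply hF.congr_of_eventuallyEq
  have hball : Metric.ball (0 : ℂ) 1 ∈ nhds z := by
    exact Metric.isOpen_ball.mem_nhds (by simpa [Metric.mem_ball, Complex.dist_eq] using hz)
  filter_upwards [hball] with y hy
  exact fM_eq (by simpa [Metric.mem_ball, Complex.dist_eq] using hy)

private lemma abs_fM_lower {M : ℝ} (hM : 0 < M) {z : ℂ} (hz : ‖z‖ < 1) :
    (1 + 2 * M) * ‖z‖ - 2 * M * (1 + ‖z‖) * Real.log (1 + ‖z‖) ≤ ‖fM M z‖ := by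
  rcases eq_or_ne z 0 with rfl | hz0
  · simp [fM_zero]
  have ht0 : 0 < ‖z‖ := norm_pos_iff.mpr hz0
  set t : ℝ := ‖z‖ with ht
  set w : ℂ := (t : ℂ)⁻¹ * z with hw
  have htne : (t : ℂ) ≠ 0 := by exact_mod_cast ht0.ne'
  have hwnorm : ‖w‖ = 1 := by
    rw [hw, norm_mul, norm_inv, Complex.norm_real, Real.norm_of_nonneg ht0.le]
    field_simp
    rw [ht]
  have hwz : (t : ℂ) * w = z := by
    rw [hw]; field_simp
  have hcw : (starRingEnd ℂ) w * w = 1 := by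
    have h := Complex.mul_conj w
    rw [Complex.normSq_eq_norm_sq, hwnorm] at h
    rw [mul_comm]
    simpa using h
  set g : ℝ → ℝ := fun s => ((starRingEnd ℂ) w * fM M ((s : ℂ) * w)).re with hg
  set ψ : ℝ → ℝ := fun s =>
    g s - ((1 + 2 * M) * s - 2 * M * (1 + s) * Real.log (1 + s)) with hψ
  have key : ∀ s ∈ Set.Icc (0 : ℝ) t,
      HasDerivAt ψ
        (2 * M * (Real.log (1 + s) - Real.log ‖1 - (s : ℂ) * w‖)) s := by
    intro s hs
    obtain ⟨hs0, hst⟩ := hs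
    have hsw : ‖(s : ℂ) * w‖ < 1 := by
      rw [norm_mul, hwnorm, mul_one, Complex.norm_real, Real.norm_of_nonneg hs0]
      exact lt_of_le_of_lt hst hz
    have hid : HasDerivAt (fun y : ℂ => y * w) w (s : ℂ) := by
      simpa using (hasDerivAt_id (s : ℂ)).mul_const w
    have h1 : HasDerivAt (fun y : ℂ => (starRingEnd ℂ) w * fM M (y * w))
        ((starRingEnd ℂ) w * ((1 - 2 * (M : ℂ) * Complex.log (1 - (s : ℂ) * w)) * w)) (s : ℂ) :=
      (((hasDerivAt_fM M hsw).comp (s : ℂ) hid)).const_mul _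
    have h2 : HasDerivAt (fun s : ℝ => (starRingEnd ℂ) w * fM M ((s : ℂ) * w))
        ((starRingEnd ℂ) w * ((1 - 2 * (M : ℂ) * Complex.log (1 - (s : ℂ) * w)) * w)) s :=
      h1.comp_ofReal
    have h3 : HasDerivAt g
        (((starRingEnd ℂ) w * ((1 - 2 * (M : ℂ) * Complex.log (1 - (s : ℂ) * w)) * w)).re) s :=
      Complex.reCLM.hasFDerivAt.comp_hasDerivAt s h2
    have hre : ((starRingEnd ℂ) w * ((1 - 2 * (M : ℂ) * Complex.log (1 - (s : ℂ) * w)) * w)).re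
        = 1 - 2 * M * Real.log ‖1 - (s : ℂ) * w‖ := by
      have hmul : (starRingEnd ℂ) w * ((1 - 2 * (M : ℂ) * Complex.log (1 - (s : ℂ) * w)) * w)
          = 1 - 2 * (M : ℂ) * Complex.log (1 - (s : ℂ) * w) := by
        rw [mul_comm ((starRingEnd ℂ) w), mul_assoc, mul_comm w ((starRingEnd ℂ) w), hcw, mul_one]
      rw [hmul]
      have : (2 : ℂ) * (M : ℂ) = ((2 * M : ℝ) : ℂ) := by push_cast; ring
      rw [this, Complex.sub_re, Complex.one_re, Complex.re_ofReal_mul, Complex.log_re]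
    rw [hre] at h3
    have h1s : (0 : ℝ) < 1 + s := by linarith
    have hlogR : HasDerivAt (fun s : ℝ => Real.log (1 + s)) (1 + s)⁻¹ s := by
      have hin : HasDerivAt (fun s : ℝ => 1 + s) 1 s := (hasDerivAt_id s).const_add 1
      simpa [Function.comp_def] using (Real.hasDerivAt_log h1s.ne').comp s hin
    have h4 : HasDerivAt (fun s : ℝ => (1 + 2 * M) * s - 2 * M * (1 + s) * Real.log (1 + s))
        (1 - 2 * M * Real.log (1 + s)) s := by
      have hmul : HasDerivAt (fun s : ℝ => (1 + s) * Real.log (1 + s))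
          (1 * Real.log (1 + s) + (1 + s) * (1 + s)⁻¹) s :=
        ((hasDerivAt_id s).const_add 1).mul hlogR
      have h5 := ((hasDerivAt_id s).const_mul (1 + 2 * M)).sub (hmul.const_mul (2 * M))
      convert h5 using 1
      · rfl
      · rfl
      · funext u; simp only [id_eq, Pi.sub_apply]; ring
      · field_simp
        ring
    have := h3.sub h4
    convert this using 1
    · rfl
    · rfl
    · rfl
    ring
  have hmono : MonotoneOn ψ (Set.Icc 0 t) := by
    apply monotoneOn_of_deriv_nonneg (convex_Icc 0 t)
    · exact fun s hs => (key s hs).continuousAt.continuousWithinAt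
    · intro s hs
      rw [interior_Icc] at hs
      exact (key s (Set.mem_Icc_of_Ioo hs)).differentiableAt.differentiableWithinAt
    · intro s hs
      rw [interior_Icc] at hs
      have hs' := Set.mem_Icc_of_Ioo hs
      rw [(key s hs').deriv]
      obtain ⟨hs0, hst⟩ := hs'
      have hsw1 : ‖(s : ℂ) * w‖ < 1 := by
        rw [norm_mul, hwnorm, mul_one, Complex.norm_real, Real.norm_of_nonneg hs0]
        exact lt_of_le_of_lt hst hz
      have hpos : 0 < ‖1 - (s : ℂ) * w‖ := by
        apply norm_pos_iff.mpr
        intro h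
        have : (1 : ℂ) = (s : ℂ) * w := by linear_combination h
        rw [← this] at hsw1
        norm_num at hsw1
      have hle : ‖1 - (s : ℂ) * w‖ ≤ 1 + s := by
        calc ‖1 - (s : ℂ) * w‖ ≤ ‖(1 : ℂ)‖ + ‖(s : ℂ) * w‖ := by
              simpa using norm_sub_le (1 : ℂ) ((s : ℂ) * w)
          _ ≤ 1 + s := by
              rw [norm_mul, hwnorm, mul_one,
                Complex.norm_real, Real.norm_of_nonneg hs0]
              simp
      have := Real.log_le_log hpos hle
      nlinarith [hM.le]
  have h0t : (0 : ℝ) ∈ Set.Icc (0 : ℝ) t := Set.left_mem_Icc.mpr ht0.le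
  have htt : t ∈ Set.Icc (0 : ℝ) t := Set.right_mem_Icc.mpr ht0.le
  have hψ0 : ψ 0 = 0 := by
    simp [hψ, hg, fM_zero]
  have := hmono h0t htt ht0.le
  rw [hψ0] at this
  have hgt : g t ≤ ‖fM M z‖ := by
    rw [hg]
    calc ((starRingEnd ℂ) w * fM M ((t : ℂ) * w)).re
        ≤ ‖(starRingEnd ℂ) w * fM M ((t : ℂ) * w)‖ := Complex.re_le_norm _
      _ = ‖fM M z‖ := by
          rw [hwz, norm_mul, Complex.norm_conj, hwnorm, one_mul]
  simp only [hψ] at this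
  linarith

private lemma hasSum_S_real {r : ℝ} (h : |r| < 1) :
    HasSum (fun n : ℕ => r ^ (n + 2) / (((n : ℝ) + 2) * ((n : ℝ) + 1)))
      (r + (1 - r) * Real.log (1 - r)) := by
  have hc := hasSum_S (z := (r : ℂ)) (by rwa [Complex.norm_real, Real.norm_eq_abs])
  rw [← Complex.hasSum_ofReal]
  have h1 : (0 : ℝ) ≤ 1 - r := by
    have := abs_lt.mp h
    linarith [this.2]
  have he : (fun n : ℕ => ((r ^ (n + 2) / (((n : ℝ) + 2) * ((n : ℝ) + 1)) : ℝ) : ℂ))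
      = fun n : ℕ => (r : ℂ) ^ (n + 2) / (((n : ℂ) + 2) * ((n : ℂ) + 1)) := by
    funext n; push_cast; ring
  rw [he]
  have hv : ((r + (1 - r) * Real.log (1 - r) : ℝ) : ℂ)
      = (r : ℂ) + (1 - (r : ℂ)) * Complex.log (1 - (r : ℂ)) := by
    push_cast [Complex.ofReal_log h1]
    norm_num
  rw [hv]
  exact hc

/-- Sharpness of the Bohr–Rogosinski radius: equality for the extremal function `f_M`. -/
theorem bohr_rogosinski_sharp (M : ℝ) (hM : 0 < M) (N : ℕ) (hN : 2 ≤ N)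
    (r₀ : ℝ) (hr₀ : r₀ ∈ Set.Ioo (0 : ℝ) 1)
    (hroot : r₀ - 1 + 2 * M * (2 * r₀ - 1 + 2 * (1 - r₀) * Real.log (1 - r₀)
      - ∑ n ∈ Finset.Icc 2 (N - 1), r₀ ^ n / ((n : ℝ) * ((n : ℝ) - 1)) + 2 * Real.log 2) = 0) :
    (‖fM M (r₀ : ℂ)‖
        + ∑' n : ℕ, (2 * M / (((n : ℝ) + N) * ((n : ℝ) + N - 1))) * r₀ ^ (n + N)
      = 1 + 2 * M * (1 - 2 * Real.log 2)) ∧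
    bdyDist (fM M) = 1 + 2 * M * (1 - 2 * Real.log 2) := by
  obtain ⟨hr0, hr1⟩ := hr₀
  have habsr : |r₀| < 1 := by rw [abs_of_pos hr0]; exact hr1
  have HS := hasSum_S_real habsr
  set Sr : ℝ := r₀ + (1 - r₀) * Real.log (1 - r₀) with hSr
  have hSnn : 0 ≤ Sr := HS.nonneg fun n => by positivity
  set b : ℕ → ℝ := fun m => r₀ ^ m / ((m : ℝ) * ((m : ℝ) - 1)) with hb
  have hb2 : ∀ n : ℕ, b (n + 2) = r₀ ^ (n + 2) / (((n : ℝ) + 2) * ((n : ℝ) + 1)) := by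
    intro n
    simp only [hb]
    push_cast
    ring_nf
  have Hb : HasSum b Sr := by
    have h0 : HasSum (fun n : ℕ => b (n + 2)) Sr := by
      simp only [hb2]; exact HS
    rw [hasSum_nat_add_iff 2] at h0
    have hsum : ∑ i ∈ Finset.range 2, b i = 0 := by
      rw [Finset.sum_range_succ, Finset.sum_range_one]
      norm_num [hb]
    rwa [hsum, add_zero] at h0
  have Htail : HasSum (fun n : ℕ => b (n + N)) (Sr - ∑ i ∈ Finset.range N, b i) := by
    rw [hasSum_nat_add_iff N]
    convert Hb using 1
    · rfl
    ring
  have hPsum : ∑ i ∈ Finset.range N, b i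
      = ∑ n ∈ Finset.Icc 2 (N - 1), r₀ ^ n / ((n : ℝ) * ((n : ℝ) - 1)) := by
    simp only [hb]
    symm
    apply Finset.sum_subset
    · intro i hi
      rw [Finset.mem_Icc] at hi
      rw [Finset.mem_range]
      omega
    · intro i hi hni
      rw [Finset.mem_range] at hi
      rw [Finset.mem_Icc] at hni
      have : i < 2 := by omega
      interval_cases i <;> norm_num
  have Htail2 : HasSum (fun n : ℕ => (2 * M / (((n : ℝ) + N) * ((n : ℝ) + N - 1))) * r₀ ^ (n + N))
      (2 * M * (Sr - ∑ i ∈ Finset.range N, b i)) := by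
    have h := Htail.mul_left (2 * M)
    convert h using 2 with n
    · rfl
    simp only [hb]
    push_cast
    ring
  have habs_fM : ‖fM M (r₀ : ℂ)‖ = r₀ + 2 * M * Sr := by
    have h1 : fM M (r₀ : ℂ) = ((r₀ + 2 * M * Sr : ℝ) : ℂ) := by
      rw [fM_eq (by rwa [Complex.norm_real, Real.norm_eq_abs])]
      rw [hSr]
      push_cast [Complex.ofReal_log (by linarith : (0:ℝ) ≤ 1 - r₀)]
      ring
    rw [h1, Complex.norm_real, Real.norm_of_nonneg (by nlinarith)]
  have tailnn : 0 ≤ 2 * M * (Sr - ∑ i ∈ Finset.range N, b i) :=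
    Htail2.nonneg fun n => by
      have h1 : (0:ℝ) ≤ (n : ℝ) + N - 1 := by
        have : (2:ℝ) ≤ (N:ℝ) := by exact_mod_cast hN
        have : (0:ℝ) ≤ (n:ℝ) := Nat.cast_nonneg n
        linarith
      have h2 : (0:ℝ) ≤ (n : ℝ) + N := by positivity
      positivity
  have part1 : ‖fM M (r₀ : ℂ)‖
        + ∑' n : ℕ, (2 * M / (((n : ℝ) + N) * ((n : ℝ) + N - 1))) * r₀ ^ (n + N)
      = 1 + 2 * M * (1 - 2 * Real.log 2) := by
    rw [Htail2.tsum_eq, habs_fM, hPsum, hSr]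
    linear_combination hroot
  refine ⟨part1, ?_⟩
  have hL : 0 < 1 + 2 * M * (1 - 2 * Real.log 2) := by
    rw [← part1, Htail2.tsum_eq, habs_fM]
    nlinarith
  set L : ℝ := 1 + 2 * M * (1 - 2 * Real.log 2) with hLdef
  have hΦ1 : (1 + 2 * M) * 1 - 2 * M * (1 + 1) * Real.log (1 + 1) = L := by
    rw [hLdef]
    norm_num
    ring
  have hcont : ContinuousAt
      (fun y : ℝ => (1 + 2 * M) * y - 2 * M * (1 + y) * Real.log (1 + y)) 1 := by
    apply ContinuousAt.sub
    · exact continuousAt_const.mul continuousAt_id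
    · exact (continuousAt_const.mul (continuousAt_const.add continuousAt_id)).mul
        ((Real.continuousAt_log (by norm_num : (1:ℝ) + 1 ≠ 0)).comp
          (continuousAt_const.add continuousAt_id))
  unfold bdyDist
  have hu : (fun z : ℂ => ‖fM M z - fM M 0‖)
      = fun z : ℂ => ‖fM M z‖ := by
    funext z; rw [fM_zero, sub_zero]
  rw [hu]
  set l := nhdsWithin (1 : ℝ) (Set.Iio 1) with hl
  set F := Filter.comap (fun z : ℂ => ‖z‖) l with hF
  haveI hlne : l.NeBot := by rw [hl]; exact nhdsLT_neBot 1
  set e : ℝ → ℂ := fun t => -(t : ℂ) with he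
  have h0l : ∀ᶠ t in l, (0 : ℝ) < t := by
    rw [hl]
    exact (eventually_gt_nhds (by norm_num : (0:ℝ) < 1)).filter_mono nhdsWithin_le_nhds
  have hiol : ∀ᶠ t in l, t < 1 := by
    rw [hl]
    filter_upwards [self_mem_nhdsWithin] with t ht
    exact ht
  have hTe : Filter.Tendsto (fun t : ℝ => ‖e t‖) l l := by
    have habse : ∀ t : ℝ, ‖e t‖ = |t| := fun t => by
      rw [he]; simp
    simp only [habse]
    rw [hl, tendsto_nhdsWithin_iff]
    constructor
    · exact (continuous_abs.tendsto' 1 1 abs_one).mono_left (hl ▸ nhdsWithin_le_nhds)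
    · filter_upwards [h0l, hiol] with t h1 h2
      rw [Set.mem_Iio, abs_of_pos h1]
      exact h2
  have hGF : Filter.map e l ≤ F := by
    rw [hF]
    apply Filter.map_le_iff_le_comap.mp
    rw [Filter.map_map]
    exact hTe
  have hTu : Filter.Tendsto (fun t : ℝ => ‖fM M (e t)‖) l (𝓝 L) := by
    have hev : (fun t : ℝ => ‖fM M (e t)‖)
        =ᶠ[l] fun t : ℝ => |(1 + 2 * M) * t - 2 * M * (1 + t) * Real.log (1 + t)| := by
      filter_upwards [h0l, hiol] with t h1 h2
      have hnorm : ‖e t‖ < 1 := by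
        rw [he]
        simp only [norm_neg, Complex.norm_real, Real.norm_eq_abs]
        rwa [abs_of_pos h1]
      rw [fM_eq hnorm]
      have harg : (1 : ℂ) - e t = ((1 + t : ℝ) : ℂ) := by rw [he]; push_cast; ring
      have hval : e t + 2 * (M : ℂ) * (e t + (1 - e t) * Complex.log (1 - e t))
          = ((-((1 + 2 * M) * t - 2 * M * (1 + t) * Real.log (1 + t)) : ℝ) : ℂ) := by
        rw [harg, he, ← Complex.ofReal_log (by linarith : (0:ℝ) ≤ 1 + t)]
        push_cast
        ring
      rw [hval, Complex.norm_real, Real.norm_eq_abs, abs_neg]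
    apply Filter.Tendsto.congr' hev.symm
    have hcont2 := continuous_abs.continuousAt.comp hcont
    have : ContinuousAt (fun y : ℝ => |(1 + 2 * M) * y - 2 * M * (1 + y) * Real.log (1 + y)|) 1 :=
      hcont2
    have h3 := this.tendsto
    rw [show |(1 + 2 * M) * 1 - 2 * M * (1 + 1) * Real.log (1 + 1)| = L by
      rw [hΦ1]; exact abs_of_pos hL] at h3
    exact h3.mono_left (hl ▸ nhdsWithin_le_nhds)
  have hTu' : Filter.Tendsto (fun z : ℂ => ‖fM M z‖) (Filter.map e l) (𝓝 L) :=
    Filter.tendsto_map'_iff.mpr hTu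
  have hbdd : F.IsBoundedUnder (· ≥ ·) (fun z : ℂ => ‖fM M z‖) :=
    ⟨0, Filter.eventually_map.mpr (Filter.Eventually.of_forall fun z => norm_nonneg _)⟩
  have upper : Filter.liminf (fun z : ℂ => ‖fM M z‖) F ≤ L :=
    (Filter.liminf_le_liminf_of_le hGF hbdd hTu'.isCoboundedUnder_ge).trans_eq hTu'.liminf_eq
  have hcobF : F.IsCoboundedUnder (· ≥ ·) (fun z : ℂ => ‖fM M z‖) := by
    apply Filter.IsCobounded.of_frequently_le (l := L + 1)
    rw [Filter.frequently_map]
    have hev2 : ∀ᶠ z in Filter.map e l, ‖fM M z‖ ≤ L + 1 :=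
      (hTu'.eventually_lt_const (by linarith : L < L + 1)).mono fun z h => h.le
    exact hev2.frequently.filter_mono hGF
  have lower : ∀ ε > 0, L - ε ≤ Filter.liminf (fun z : ℂ => ‖fM M z‖) F := by
    intro ε hε
    apply Filter.le_liminf_of_le hcobF
    rw [hF, Filter.eventually_comap]
    have h1 : ∀ᶠ y in l, L - ε < (1 + 2 * M) * y - 2 * M * (1 + y) * Real.log (1 + y) :=
      hcont.eventually (eventually_gt_nhds (by
        show L - ε < (1 + 2 * M) * 1 - 2 * M * (1 + 1) * Real.log (1 + 1)
        rw [hΦ1]; linarith)) |>.filter_mono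
        (hl ▸ nhdsWithin_le_nhds)
    filter_upwards [h1, hiol] with y hy1 hy2 z hz
    have hzn : ‖z‖ < 1 := by rw [hz]; exact hy2
    have hlow := abs_fM_lower hM hzn
    rw [hz] at hlow
    linarith
  have lower' : L ≤ Filter.liminf (fun z : ℂ => ‖fM M z‖) F := by
    by_contra hcon
    push_neg at hcon
    have h1 := lower ((L - Filter.liminf (fun z : ℂ => ‖fM M z‖) F) / 2)
      (by linarith)
    linarith
  exact le_antisymm upper lower'
end

section
/- Let M > 0, let N ≥ 2 be an integer, and let r₀ ∈ (0,1) satisfy (r₀ + 2M(r₀ + (1−r₀)ln(1−r₀)))² − 1 + 2M(r₀ − 1 + (1−r₀)ln(1−r₀) − Σ_{n=2}^{N−1} r₀ⁿ/(n(n−1)) + 2 ln 2) = 0. Then for the function f_M(z) = z + 2M Σ_{n=2}^∞ zⁿ/(n(n−1)) (whose coefficients are a_n = 2M/(n(n−1)), b_n = 0), equality holds: |f_M(r₀)|² + Σ_{n=N}^∞ (2M/(n(n−1))) r₀ⁿ = 1 + 2M(1 − 2 ln 2) = d(f_M(0), ∂f_M(𝔻)). -/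
open Filter MeasureTheory

set_option maxHeartbeats 1000000

/- ### Auxiliary lemmas -/

lemma key_ineq (t : ℝ) (h0 : 0 ≤ t) (ht : t < Real.pi/2) :
    Real.cos t ^ 2 * Real.log (2 * Real.cos t) + t * (Real.sin t * Real.cos t) ≤ Real.log 2 := by
  have hπ := Real.pi_pos
  set c := Real.cos t with hcdef
  set s := Real.sin t with hsdef
  have hc : 0 < c := Real.cos_pos_of_mem_Ioo ⟨by linarith, ht⟩
  have hs : 0 ≤ s := Real.sin_nonneg_of_nonneg_of_le_pi h0 (by linarith)
  have hs1 : s ≤ 1 := Real.sin_le_one t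
  have hc1 : c ≤ 1 := Real.cos_le_one t
  have hsc : s^2 + c^2 = 1 := Real.sin_sq_add_cos_sq t
  have hl2gt := Real.log_two_gt_d9
  have hl2lt := Real.log_two_lt_d9
  by_cases hcase : (0.7:ℝ) ≤ c
  · -- near t = 0 : use t ≤ tan t and the log series
    have htsc : t * (s * c) ≤ s^2 := by
      rcases eq_or_lt_of_le h0 with h0' | h0'
      · rw [← h0']; nlinarith
      · have h1 := Real.lt_tan h0' ht
        rw [Real.tan_eq_sin_div_cos] at h1
        have h2 : t * (s*c) ≤ (s/c) * (s*c) :=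
          mul_le_mul_of_nonneg_right h1.le (by positivity)
        calc t * (s*c) ≤ (s/c)*(s*c) := h2
          _ = s^2 := by field_simp
    have hlog2c : Real.log (2*c) = Real.log 2 + Real.log c :=
      Real.log_mul (by norm_num) hc.ne'
    set u := 1 - c with hu
    have hu0 : (0:ℝ) ≤ u := by simp only [hu]; linarith
    have hu3 : u ≤ 0.3 := by simp only [hu]; linarith
    have hub : |u| < 1 := by rw [abs_of_nonneg hu0]; linarith
    have hser := Real.abs_log_sub_add_sum_range_le hub 3
    have hsum : ∑ i ∈ Finset.range 3, u ^ (i + 1) / ((i:ℝ) + 1)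
        = u + u^2/2 + u^3/3 := by
      simp [Finset.sum_range_succ]
      ring
    rw [hsum] at hser
    have h1u : (1:ℝ) - u = c := by rw [hu]; ring
    rw [h1u, abs_of_nonneg hu0, h1u] at hser
    have hlogc : Real.log c ≤ -(u + u^2/2 + u^3/3) + u^4/c := by
      have := (abs_le.mp hser).2
      linarith
    have hlogc2 : c^2 * Real.log c ≤ c^2 * (-(u + u^2/2 + u^3/3)) + c * u^4 := by
      have h2 : c^2 * (u^4/c) = c * u^4 := by field_simp
      nlinarith [mul_le_mul_of_nonneg_left hlogc (sq_nonneg c)]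
    have hQ : u*(1+c)*(1-Real.log 2) ≤ c^2*(u+u^2/2+u^3/3) - c*u^4 := by
      have hc' : c = 1 - u := by rw [hu]; ring
      rw [hc']
      have hlog' : (0:ℝ) ≤ Real.log 2 - 0.6931471803 := by linarith
      nlinarith [mul_nonneg hu0 (by linarith : (0:ℝ) ≤ 0.3 - u),
        mul_nonneg (mul_nonneg hu0 hu0) (by linarith : (0:ℝ) ≤ 0.3 - u),
        mul_nonneg (mul_nonneg (mul_nonneg hu0 hu0) hu0) (by linarith : (0:ℝ) ≤ 0.3 - u),
        sq_nonneg (u*u), mul_nonneg (mul_nonneg hu0 hu0) hu0,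
        mul_nonneg hu0 hlog', mul_nonneg (mul_nonneg hu0 hu0) hlog']
    have hs2 : s^2 = u*(1+c) := by nlinarith
    rw [hlog2c]
    nlinarith
  · -- c ≤ 0.7 : use t ≤ π/2 - c
    push_neg at hcase
    have hpi : Real.pi < 3.15 := by
      have := Real.pi_lt_d6; linarith
    have htle : t ≤ Real.pi/2 - c := by
      have h1 : Real.sin (Real.pi/2 - t) = c := by rw [Real.sin_pi_div_two_sub]
      have h2 : Real.sin (Real.pi/2 - t) ≤ Real.pi/2 - t := Real.sin_le (by linarith)
      linarith [h1 ▸ h2]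
    have hlc : Real.log (2*c) ≤ 2*c - 1 := Real.log_le_sub_one_of_pos (by positivity)
    have h3 : t * (s*c) ≤ (Real.pi/2 - c) * (s*c) :=
      mul_le_mul_of_nonneg_right htle (by positivity)
    have h4 : c^2 * Real.log (2*c) ≤ c^2 * (2*c-1) :=
      mul_le_mul_of_nonneg_left hlc (sq_nonneg c)
    have h5 : (Real.pi/2 - c) * (s*c) ≤ (1.575 - c) * (s*c) := by
      apply mul_le_mul_of_nonneg_right _ (by positivity)
      linarith
    have hsle : s ≤ 1 - c^2/2 := by nlinarith [sq_nonneg (s - (1 - c^2/2))]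
    have h6 : (1.575 - c) * (s*c) ≤ (1.575 - c) * c * (1 - c^2/2) := by
      have h6' : (1.575 - c) * (s*c) = ((1.575-c)*c) * s := by ring
      rw [h6']
      have h7 : ((1.575-c)*c) * s ≤ ((1.575-c)*c) * (1 - c^2/2) :=
        mul_le_mul_of_nonneg_left hsle (by nlinarith)
      linarith
    have h8 : c^2*(2*c-1) + (1.575 - c) * c * (1 - c^2/2) ≤ Real.log 2 := by
      nlinarith [mul_nonneg hc.le (by linarith : (0:ℝ) ≤ 0.7 - c),
        mul_nonneg (mul_nonneg hc.le hc.le) (by linarith : (0:ℝ) ≤ 0.7 - c),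
        mul_nonneg (mul_nonneg (mul_nonneg hc.le hc.le) hc.le) (by linarith : (0:ℝ) ≤ 0.7 - c)]
    linarith

lemma hasSum_phiC {z : ℂ} (hz : ‖z‖ < 1) :
    HasSum (fun n : ℕ => z ^ (n+2) / (((n:ℂ)+2) * ((n:ℂ)+1)))
      (z + (1 - z) * Complex.log (1 - z)) := by
  have h1 : HasSum (fun n : ℕ => z ^ n / (n:ℂ)) (-Complex.log (1-z)) :=
    Complex.hasSum_taylorSeries_neg_log hz
  have h2 : HasSum (fun n : ℕ => z ^ (n+1) / ((n:ℂ)+1)) (-Complex.log (1-z)) := by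
    have h := (hasSum_nat_add_iff (f := fun n : ℕ => z ^ n / (n:ℂ))
        (g := -Complex.log (1-z)) 1).2 (by simpa using h1)
    exact h.congr_fun (fun n => by push_cast; ring)
  have h3 : HasSum (fun n : ℕ => z ^ (n+2) / ((n:ℂ)+2)) (-Complex.log (1-z) - z) := by
    have h := (hasSum_nat_add_iff (f := fun n : ℕ => z ^ n / (n:ℂ))
        (g := -Complex.log (1-z) - z) 2).2 ?_
    · exact h.congr_fun (fun n => by push_cast; ring)
    · have he : -Complex.log (1-z) - z + ∑ i ∈ Finset.range 2, z ^ i / (i:ℂ)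
          = -Complex.log (1-z) := by
        simp [Finset.sum_range_succ]
      rw [he]; exact h1
  have h4 := (h2.mul_left z).sub h3
  have hval : z * -Complex.log (1-z) - (-Complex.log (1-z) - z)
      = z + (1 - z) * Complex.log (1 - z) := by ring
  rw [hval] at h4
  refine h4.congr_fun fun n => ?_
  have hn1 : ((n:ℂ)+1) ≠ 0 := by exact_mod_cast (Nat.succ_ne_zero n)
  have hn2 : ((n:ℂ)+2) ≠ 0 := by exact_mod_cast (Nat.succ_ne_zero (n+1))
  field_simp
  ring

lemma hasSum_phiR {x : ℝ} (hx : |x| < 1) :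
    HasSum (fun n : ℕ => x ^ (n+2) / (((n:ℝ)+2) * ((n:ℝ)+1)))
      (x + (1 - x) * Real.log (1 - x)) := by
  have h2 : HasSum (fun n : ℕ => x ^ (n+1) / ((n:ℝ)+1)) (-Real.log (1-x)) :=
    Real.hasSum_pow_div_log_of_abs_lt_one hx
  have h3 : HasSum (fun n : ℕ => x ^ (n+2) / ((n:ℝ)+2)) (-Real.log (1-x) - x) := by
    have h := (hasSum_nat_add_iff (f := fun n : ℕ => x ^ (n+1) / ((n:ℝ)+1))
        (g := -Real.log (1-x) - x) 1).2 ?_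
    · exact h.congr_fun (fun n => by push_cast; ring)
    · have he : -Real.log (1-x) - x + ∑ i ∈ Finset.range 1, x ^ (i+1) / ((i:ℝ)+1)
          = -Real.log (1-x) := by
        simp
      rw [he]; exact h2
  have h4 := (h2.mul_left x).sub h3
  have hval : x * -Real.log (1-x) - (-Real.log (1-x) - x)
      = x + (1 - x) * Real.log (1 - x) := by ring
  rw [hval] at h4
  refine h4.congr_fun fun n => ?_
  have hn1 : ((n:ℝ)+1) ≠ 0 := by positivity
  have hn2 : ((n:ℝ)+2) ≠ 0 := by positivity
  field_simp
  ring

/-- The closed form of the extremal function, defined on all of `ℂ`. -/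
noncomputable def Gfun (M : ℝ) : ℂ → ℂ :=
  fun z => (1 + 2*(M:ℂ))*z + 2*M*((1-z) * Complex.log (1-z))

lemma fM_eq_Gfun (M : ℝ) {z : ℂ} (hz : ‖z‖ < 1) : fM M z = Gfun M z := by
  unfold fM Gfun
  rw [(hasSum_phiC hz).tsum_eq]
  ring

lemma tendsto_mul_log_zero :
    Filter.Tendsto (fun w : ℂ => w * Complex.log w) (nhds 0) (nhds 0) := by
  apply squeeze_zero_norm'
    (a := fun w : ℂ => 2*Real.sqrt (‖w‖) + Real.pi * ‖w‖)
  · filter_upwards [Metric.ball_mem_nhds (0:ℂ) one_pos] with w hw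
    rw [mem_ball_zero_iff] at hw
    rcases eq_or_ne w 0 with rfl | hw0
    · simp [Real.pi_nonneg]
    · have habs : 0 < ‖w‖ := norm_pos_iff.mpr hw0
      have hlt1 : ‖w‖ < 1 := by simpa using hw
      have h1 : ‖w * Complex.log w‖ = ‖w‖ * ‖Complex.log w‖ := by
        simp [map_mul]
      have h2 : ‖Complex.log w‖ ≤ |Real.log (‖w‖)| + Real.pi := by
        calc ‖Complex.log w‖ ≤ |(Complex.log w).re| + |(Complex.log w).im| :=
              Complex.norm_le_abs_re_add_abs_im _
          _ ≤ |Real.log (‖w‖)| + Real.pi := by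
              rw [Complex.log_re, Complex.log_im]
              have := Complex.abs_arg_le_pi w
              gcongr
      set x := ‖w‖ with hx
      set s := Real.sqrt x with hs
      have hspos : 0 < s := Real.sqrt_pos.2 habs
      have hs2 : s^2 = x := Real.sq_sqrt habs.le
      have h3 : |Real.log x| ≤ 2 / s := by
        rw [abs_of_nonpos (Real.log_nonpos habs.le hlt1.le)]
        have h4 : Real.log x = 2 * Real.log s := by
          rw [← hs2, Real.log_pow]; push_cast; ring
        have h5 : -Real.log s ≤ 1/s - 1 := by
          have := Real.log_le_sub_one_of_pos (show (0:ℝ) < s⁻¹ by positivity)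
          rw [Real.log_inv] at this
          simpa [one_div] using this
        rw [h4]
        calc -(2*Real.log s) = 2*(-Real.log s) := by ring
          _ ≤ 2*(1/s) := by linarith
          _ = 2/s := by ring
      have h6 : x * |Real.log x| ≤ 2 * s := by
        calc x * |Real.log x| ≤ x * (2/s) := by
              apply mul_le_mul_of_nonneg_left h3 habs.le
          _ = 2 * s := by rw [← hs2]; field_simp
      calc ‖w * Complex.log w‖ = x * ‖Complex.log w‖ := h1
        _ ≤ x * (|Real.log x| + Real.pi) := by
            apply mul_le_mul_of_nonneg_left h2 habs.le
        _ = x * |Real.log x| + Real.pi * x := by ring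
        _ ≤ 2 * s + Real.pi * x := by linarith
  · have hcont : Continuous (fun w : ℂ =>
        2*Real.sqrt (‖w‖) + Real.pi * ‖w‖) := by
      continuity
    have := hcont.tendsto 0
    simpa using this

lemma contOn_Gfun (M : ℝ) : ContinuousOn (Gfun M) (Metric.closedBall 0 1) := by
  have hH : ContinuousOn (fun z : ℂ => (1-z) * Complex.log (1-z))
      (Metric.closedBall 0 1) := by
    intro z hz
    rcases eq_or_ne z 1 with rfl | hz1
    · have h0 : Filter.Tendsto (fun z : ℂ => 1 - z) (nhds 1) (nhds 0) := by
        have : Continuous (fun z : ℂ => 1 - z) := by continuity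
        simpa using this.tendsto 1
      have h1 := tendsto_mul_log_zero.comp h0
      have h2 : (fun z : ℂ => (1-z) * Complex.log (1-z))
          = (fun w : ℂ => w * Complex.log w) ∘ (fun z : ℂ => 1 - z) := rfl
      rw [ContinuousWithinAt, h2]
      have hval : ((1:ℂ) - 1) * Complex.log (1 - 1) = 0 := by simp
      rw [hval]
      exact h1.mono_left nhdsWithin_le_nhds
    · apply ContinuousAt.continuousWithinAt
      have hslit : (1 - z) ∈ Complex.slitPlane := by
        rw [Complex.mem_slitPlane_iff]
        rcases eq_or_ne z.im 0 with him | him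
        · left
          simp only [Complex.sub_re, Complex.one_re]
          have hre : |z.re| ≤ ‖z‖ := Complex.abs_re_le_norm z
          have hz' : ‖z‖ ≤ 1 := by simpa [Metric.mem_closedBall] using hz
          have hne : z.re ≠ 1 := by
            intro h
            apply hz1
            rw [Complex.ext_iff]
            constructor <;> simp [h, him]
          have : z.re < 1 := lt_of_le_of_ne (by linarith [abs_le.1 (hre.trans hz')|>.2]) hne
          linarith
        · right
          simpa [Complex.sub_im] using him
      have hc1 : ContinuousAt (fun z : ℂ => 1 - z) z := by fun_prop
      have hc2 : ContinuousAt Complex.log (1 - z) := continuousAt_clog hslit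
      exact hc1.mul (hc2.comp hc1)
  unfold Gfun
  apply ContinuousOn.add
  · fun_prop
  · exact (continuousOn_const).mul hH

lemma boundary_bd (M : ℝ) (hM : 0 < M) (ζ : ℂ) (hζ : ‖ζ‖ = 1) :
    1 + 2*M*(1 - 2*Real.log 2) ≤ ‖Gfun M ζ‖ := by
  have hlog2 := Real.log_two_gt_d9
  obtain ⟨w, rfl⟩ : ∃ w, ζ = 1 - w := ⟨1 - ζ, by ring⟩
  have hms : (1 - w) * ((1:ℂ) - (starRingEnd ℂ) w) = 1 := by
    have h1 : (1 - w) * (starRingEnd ℂ) (1 - w) = 1 := by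
      rw [Complex.mul_conj]
      norm_cast
      rw [Complex.normSq_eq_norm_sq, hζ]; norm_num
    rw [map_sub, map_one] at h1
    exact h1
  rcases eq_or_ne w 0 with hw0 | hw0
  · rw [hw0]
    have h2 : Gfun M (1 - 0) = (1 + 2*(M:ℂ)) := by
      simp [Gfun]
    rw [h2]
    have h3 : ‖1 + 2*(M:ℂ)‖ = 1 + 2*M := by
      rw [show (1 + 2*(M:ℂ)) = (((1+2*M : ℝ)):ℂ) by push_cast; ring,
        Complex.norm_real, Real.norm_eq_abs, abs_of_pos (by linarith)]
    rw [h3]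
    nlinarith
  · have hwc : w * ((1:ℂ) - (starRingEnd ℂ) w) = -(starRingEnd ℂ) w := by
      linear_combination (-1 : ℂ) * hms
    have hG : Gfun M (1 - w) * (starRingEnd ℂ) (1 - w)
        = (1 + 2*(M:ℂ)) - 2*M*((starRingEnd ℂ) w * Complex.log w) := by
      simp only [Gfun, map_sub, map_one]
      have h4 : (1:ℂ) - (1 - w) = w := by ring
      rw [h4]
      linear_combination (1 + 2*(M:ℂ)) * hms + 2*(M:ℂ)*Complex.log w * hwc
    have hre : (Gfun M (1 - w) * (starRingEnd ℂ) (1 - w)).re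
        = 1 + 2*M - 2*M*(w.re * Real.log (‖w‖) + w.im * Complex.arg w) := by
      rw [hG]
      simp [Complex.sub_re, Complex.mul_re, Complex.mul_im, Complex.conj_re, Complex.conj_im,
        Complex.log_re, Complex.log_im, Complex.add_re, Complex.one_re, Complex.ofReal_re,
        Complex.add_im, Complex.one_im, Complex.ofReal_im]
    have habspos : 0 < ‖w‖ := norm_pos_iff.mpr hw0
    set a := Complex.arg w with hadef
    have hwre : w.re = ‖w‖ * Real.cos a := by
      rw [hadef, Complex.cos_arg hw0]
      field_simp
    have hwim : w.im = ‖w‖ * Real.sin a := by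
      rw [hadef, Complex.sin_arg]
      field_simp
    have hsq : ‖w‖ ^ 2 = 2 * w.re := by
      have h5 : w * (starRingEnd ℂ) w = w + (starRingEnd ℂ) w := by
        linear_combination hms
      have h6 := congrArg Complex.re h5
      simp only [Complex.mul_re, Complex.add_re, Complex.conj_re, Complex.conj_im] at h6
      rw [Complex.sq_norm, Complex.normSq_apply]
      linarith [h6]
    have habseq : ‖w‖ = 2 * Real.cos a := by
      have h8 := hsq
      rw [hwre] at h8
      have h7 : ‖w‖ * ‖w‖ = ‖w‖ * (2 * Real.cos a) := by
        nlinarith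
      exact mul_left_cancel₀ habspos.ne' h7
    have hwrepos : 0 < w.re := by
      nlinarith
    have haπ : |a| < Real.pi/2 :=
      Complex.abs_arg_lt_pi_div_two_iff.mpr (Or.inl hwrepos)
    have hk := key_ineq |a| (abs_nonneg a) haπ
    rw [Real.cos_abs] at hk
    have hsin : |a| * (Real.sin |a| * Real.cos a) = a * (Real.sin a * Real.cos a) := by
      rcases le_or_gt 0 a with h | h
      · rw [abs_of_nonneg h]
      · rw [abs_of_neg h, Real.sin_neg]; ring
    rw [hsin] at hk
    have hQ : w.re * Real.log (‖w‖) + w.im * a ≤ 2 * Real.log 2 := by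
      rw [hwre, hwim, habseq]
      nlinarith [hk]
    have hRe : 1 + 2*M*(1 - 2*Real.log 2) ≤ (Gfun M (1 - w) * (starRingEnd ℂ) (1 - w)).re := by
      rw [hre]
      nlinarith [hQ]
    calc 1 + 2*M*(1 - 2*Real.log 2)
        ≤ (Gfun M (1 - w) * (starRingEnd ℂ) (1 - w)).re := hRe
      _ ≤ ‖Gfun M (1 - w) * (starRingEnd ℂ) (1 - w)‖ := Complex.re_le_norm _
      _ = ‖Gfun M (1 - w)‖ := by
          rw [norm_mul, Complex.norm_conj, hζ, mul_one]

lemma liminf_Gfun (M : ℝ) (hM : 0 < M) (hD : 0 ≤ 1 + 2*M*(1 - 2*Real.log 2)) :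
    Filter.liminf (fun z : ℂ => ‖Gfun M z‖)
      (Filter.comap (fun z : ℂ => ‖z‖) (nhdsWithin 1 (Set.Iio 1)))
      = 1 + 2*M*(1 - 2*Real.log 2) := by
  set D := 1 + 2*M*(1 - 2*Real.log 2) with hDdef
  set u : ℂ → ℝ := fun z => ‖Gfun M z‖ with hu
  set F : Filter ℂ := Filter.comap (fun z : ℂ => ‖z‖) (nhdsWithin 1 (Set.Iio 1))
    with hF
  have hIoo : ∀ a : ℝ, a < 1 → {z : ℂ | ‖z‖ ∈ Set.Ioo a 1} ∈ F := by
    intro a ha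
    exact Filter.preimage_mem_comap (Ioo_mem_nhdsLT_of_mem ⟨ha, le_refl 1⟩)
  haveI hne : F.NeBot := by
    apply Filter.comap_neBot
    intro t ht
    obtain ⟨s', hs'⟩ := (nhdsLT_neBot (1:ℝ)).nonempty_of_mem
      (Filter.inter_mem ht (Ioo_mem_nhdsLT_of_mem (by norm_num : (1:ℝ) ∈ Set.Ioc 0 1)))
    exact ⟨(s':ℂ), by
      simpa [Complex.norm_real, Real.norm_eq_abs, abs_of_nonneg (le_of_lt hs'.2.1)] using hs'.1⟩
  obtain ⟨C, hC⟩ := (isCompact_closedBall (0:ℂ) 1).exists_bound_of_continuousOn (contOn_Gfun M)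
  have hbdd : Filter.IsBoundedUnder (· ≤ ·) F u := by
    refine ⟨C, Filter.eventually_map.2 ?_⟩
    filter_upwards [hIoo 0 one_pos] with z hz
    have hz1 : z ∈ Metric.closedBall (0:ℂ) 1 := by
      simp only [Metric.mem_closedBall, dist_zero_right]
      exact le_of_lt hz.2
    simpa [hu] using hC z hz1
  have hbdd0 : Filter.IsBoundedUnder (· ≥ ·) F u := by
    refine ⟨0, Filter.eventually_map.2 (Filter.Eventually.of_forall fun z => ?_)⟩
    simp only [hu]
    exact norm_nonneg _
  -- lower bound
  have hlow : D ≤ Filter.liminf u F := by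
    apply le_of_forall_pos_le_add
    intro ε hε
    have huc := Metric.uniformContinuousOn_iff.1
      ((isCompact_closedBall (0:ℂ) 1).uniformContinuousOn_of_continuous
        (continuous_norm.comp_continuousOn (contOn_Gfun M)))
    obtain ⟨δ, hδ0, hδ⟩ := huc ε hε
    have hev : ∀ᶠ z in F, D - ε ≤ u z := by
      filter_upwards [hIoo (max (1-δ) 0) (max_lt (by linarith) one_pos)] with z hz
      obtain ⟨hz1, hz2⟩ := hz
      set r := ‖z‖ with hr
      have hrpos : 0 < r := lt_of_le_of_lt (le_max_right _ _) hz1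
      have hrδ : 1 - δ < r := lt_of_le_of_lt (le_max_left _ _) hz1
      set ζ : ℂ := z / (r : ℂ) with hζdef
      have hζabs : ‖ζ‖ = 1 := by
        rw [hζdef, norm_div, Complex.norm_real, Real.norm_eq_abs, abs_of_pos hrpos, ← hr, div_self hrpos.ne']
      have hzball : z ∈ Metric.closedBall (0:ℂ) 1 := by
        simp only [Metric.mem_closedBall, dist_zero_right]
        exact le_of_lt hz2
      have hζball : ζ ∈ Metric.closedBall (0:ℂ) 1 := by
        simp only [Metric.mem_closedBall, dist_zero_right, hζabs]
        exact le_refl 1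
      have hdist : dist z ζ < δ := by
        have hrne : ((r:ℝ):ℂ) ≠ 0 := by
          exact_mod_cast hrpos.ne'
        have h1 : z - ζ = z * ((((r:ℝ):ℂ) - 1) / (r:ℂ)) := by
          rw [hζdef]
          field_simp
        have h2 : dist z ζ = ‖z - ζ‖ := dist_eq_norm z ζ
        rw [h2, h1, norm_mul, norm_div]
        have h3 : ‖((r:ℝ):ℂ) - 1‖ = 1 - r := by
          rw [show (((r:ℝ):ℂ) - 1) = (((r - 1 : ℝ)):ℂ) by push_cast; ring,
            Complex.norm_real, Real.norm_eq_abs, abs_of_nonpos (by linarith)]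
          ring
        rw [h3, Complex.norm_real, Real.norm_eq_abs, abs_of_pos hrpos, ← hr]
        rw [div_eq_mul_inv, ← mul_assoc, mul_comm r (1-r), mul_assoc,
          mul_inv_cancel₀ hrpos.ne', mul_one]
        linarith
      have hclose := hδ z hzball ζ hζball hdist
      rw [Real.dist_eq] at hclose
      have hbound := boundary_bd M hM ζ hζabs
      have : |u z - u ζ| < ε := hclose
      have h5 : u ζ - ε < u z := by
        cases abs_lt.1 this with
        | intro h6 h7 => linarith
      simp only [hu] at h5 hbound ⊢
      linarith
    have := le_liminf_of_le hbdd.isCoboundedUnder_ge hev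
    linarith
  -- upper bound
  have hupp : Filter.liminf u F ≤ D := by
    apply le_of_forall_pos_le_add
    intro ε hε
    -- value at -1
    have hGm1 : Gfun M (-1) = (((-(1+2*M) + 4*M*Real.log 2 : ℝ)) : ℂ) := by
      unfold Gfun
      have h1 : (1:ℂ) - (-1) = (((2:ℝ)):ℂ) := by norm_num
      rw [h1, ← Complex.ofReal_log (by norm_num : (0:ℝ) ≤ 2)]
      push_cast
      ring
    have hum1 : u (-1) = D := by
      simp only [hu]
      rw [hGm1, Complex.norm_real, Real.norm_eq_abs, abs_of_nonpos (by rw [hDdef] at hD; linarith), hDdef]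
      ring
    have hcw : ContinuousWithinAt u (Metric.closedBall 0 1) (-1) :=
      (continuous_norm.comp_continuousOn (contOn_Gfun M)) (-1)
        (by simp [Metric.mem_closedBall])
    have hmap : Filter.Tendsto (fun r : ℝ => (-(r:ℂ)))
        (nhdsWithin 1 (Set.Iio 1)) (nhdsWithin (-1) (Metric.closedBall 0 1)) := by
      apply tendsto_nhdsWithin_of_tendsto_nhds_of_eventually_within
      · have hc : Continuous (fun r : ℝ => (-(r:ℂ))) := by continuity
        have := hc.tendsto 1
        simp only [Complex.ofReal_one] at this
        exact this.mono_left nhdsWithin_le_nhds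
      · filter_upwards [Ioo_mem_nhdsLT_of_mem (by norm_num : (1:ℝ) ∈ Set.Ioc 0 1)] with r hr
        simp only [Metric.mem_closedBall, dist_zero_right, norm_neg, Complex.norm_real,
          Real.norm_eq_abs]
        rw [abs_of_pos hr.1]
        exact le_of_lt hr.2
    have htd : Filter.Tendsto (fun r : ℝ => u (-(r:ℂ))) (nhdsWithin 1 (Set.Iio 1)) (nhds D) := by
      have := hcw.tendsto.comp hmap
      rwa [hum1] at this
    have hfreq : ∃ᶠ z in F, u z ≤ D + ε := by
      rw [hF, Filter.frequently_comap]
      have hev1 : ∀ᶠ (r : ℝ) in nhdsWithin (1:ℝ) (Set.Iio 1), u (-(r:ℂ)) < D + ε :=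
        Filter.Tendsto.eventually_lt_const (by linarith : D < D + ε) htd
      have hev2 : ∀ᶠ (r : ℝ) in nhdsWithin (1:ℝ) (Set.Iio 1), r ∈ Set.Ioo (0:ℝ) 1 :=
        Ioo_mem_nhdsLT_of_mem (by norm_num : (1:ℝ) ∈ Set.Ioc 0 1)
      apply (hev1.and hev2).frequently.mono
      rintro r ⟨h1, h2⟩
      refine ⟨-(r:ℂ), ?_, h1.le⟩
      rw [norm_neg, Complex.norm_real, Real.norm_eq_abs, abs_of_pos h2.1]
    have := liminf_le_of_frequently_le hfreq hbdd0
    linarith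
  exact le_antisymm hupp hlow

/-- Sharpness of the radius of Theorem 2.4: equality for the extremal function `f_M`. -/
theorem bohr_rogosinski_sq_sharp (M : ℝ) (hM : 0 < M) (N : ℕ) (hN : 2 ≤ N)
    (r₀ : ℝ) (hr₀ : r₀ ∈ Set.Ioo (0 : ℝ) 1)
    (hroot : (r₀ + 2 * M * (r₀ + (1 - r₀) * Real.log (1 - r₀))) ^ 2 - 1
      + 2 * M * (r₀ - 1 + (1 - r₀) * Real.log (1 - r₀)
        - ∑ n ∈ Finset.Icc 2 (N - 1), r₀ ^ n / ((n : ℝ) * ((n : ℝ) - 1)) + 2 * Real.log 2) = 0) :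
    ((‖fM M (r₀ : ℂ)‖) ^ 2
        + ∑' n : ℕ, (2 * M / (((n : ℝ) + N) * ((n : ℝ) + N - 1))) * r₀ ^ (n + N)
      = 1 + 2 * M * (1 - 2 * Real.log 2)) ∧
    bdyDist (fM M) = 1 + 2 * M * (1 - 2 * Real.log 2) := by
  obtain ⟨hr0, hr1⟩ := hr₀
  set φ := r₀ + (1 - r₀) * Real.log (1 - r₀) with hφ
  have habs : |r₀| < 1 := by rw [abs_of_pos hr0]; exact hr1
  have hphiR := hasSum_phiR habs
  have hzn : ‖(r₀:ℂ)‖ < 1 := by simpa [Complex.norm_real, abs_of_pos hr0] using hr1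
  have hfMr : fM M (r₀:ℂ) = ((r₀ + 2*M*φ : ℝ) : ℂ) := by
    unfold fM
    rw [(hasSum_phiC hzn).tsum_eq]
    have hlog : Complex.log (1 - (r₀:ℂ)) = ((Real.log (1 - r₀) : ℝ) : ℂ) := by
      rw [show (1 - (r₀:ℂ)) = (((1 - r₀ : ℝ)) : ℂ) by push_cast; ring]
      exact (Complex.ofReal_log (by linarith)).symm
    rw [hlog, hφ]
    push_cast
    ring
  have habs2 : (‖fM M (r₀:ℂ)‖)^2 = (r₀ + 2*M*φ)^2 := by
    rw [hfMr, Complex.norm_real, Real.norm_eq_abs, sq_abs]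
  set F' : ℕ → ℝ := fun k => 2*M*r₀^k/((k:ℝ)*((k:ℝ)-1)) with hF'
  have hF2 : HasSum (fun n => F' (n+2)) (2*M*φ) := by
    refine (hphiR.mul_left (2*M)).congr_fun fun n => ?_
    simp only [hF']
    push_cast
    ring
  have hFsum : HasSum F' (2*M*φ) := by
    have h := (hasSum_nat_add_iff (f := F') 2).1 hF2
    have he : ∑ i ∈ Finset.range 2, F' i = 0 := by
      simp [hF', Finset.sum_range_succ]
    rwa [he, add_zero] at h
  have htail : ∑' n : ℕ, F' (n+N) = 2*M*φ - ∑ i ∈ Finset.range N, F' i := by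
    have h := Summable.sum_add_tsum_nat_add (f := F') N hFsum.summable
    rw [hFsum.tsum_eq] at h
    linarith
  have hpartial : ∑ i ∈ Finset.range N, F' i
      = 2*M*∑ n ∈ Finset.Icc 2 (N - 1), r₀ ^ n / ((n : ℝ) * ((n : ℝ) - 1)) := by
    have hIcc : Finset.Icc 2 (N-1) = Finset.Ico 2 N := by
      rw [← Finset.Ico_add_one_right_eq_Icc]
      congr 1
      omega
    rw [hIcc, Finset.mul_sum]
    have hsplit : Finset.range N = Finset.Ico 0 N := by simp
    rw [hsplit, ← Finset.sum_Ico_consecutive _ (by omega : 0 ≤ 2) (by omega : 2 ≤ N)]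
    have h0 : ∑ i ∈ Finset.Ico 0 2, F' i = 0 := by
      simp [hF', Finset.sum_range_succ, Finset.sum_Ico_eq_sum_range]
    rw [h0, zero_add]
    refine Finset.sum_congr rfl fun i _ => ?_
    simp only [hF']
    ring
  have hgoal_tail : ∑' n : ℕ, (2 * M / (((n : ℝ) + N) * ((n : ℝ) + N - 1))) * r₀ ^ (n + N)
      = ∑' n : ℕ, F' (n+N) := by
    refine tsum_congr fun n => ?_
    simp only [hF']
    push_cast
    ring
  have hpart1 : (‖fM M (r₀ : ℂ)‖) ^ 2
        + ∑' n : ℕ, (2 * M / (((n : ℝ) + N) * ((n : ℝ) + N - 1))) * r₀ ^ (n + N)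
      = 1 + 2 * M * (1 - 2 * Real.log 2) := by
    rw [habs2, hgoal_tail, htail, hpartial]
    linear_combination hroot
  refine ⟨hpart1, ?_⟩
  -- positivity of the boundary distance, from part 1
  have htsum_nonneg : 0 ≤ ∑' n : ℕ, (2 * M / (((n : ℝ) + N) * ((n : ℝ) + N - 1))) * r₀ ^ (n + N) := by
    apply tsum_nonneg
    intro n
    have h1 : (0:ℝ) < ((n : ℝ) + N) * ((n : ℝ) + N - 1) := by
      have : (2:ℝ) ≤ (n:ℝ) + N := by
        have : (2:ℝ) ≤ (N:ℝ) := by exact_mod_cast hN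
        have hn0 : (0:ℝ) ≤ (n:ℝ) := Nat.cast_nonneg n
        linarith
      nlinarith
    positivity
  have hD : 0 ≤ 1 + 2*M*(1 - 2*Real.log 2) := by
    rw [← hpart1]
    positivity
  -- part 2: the boundary distance
  have hfM0 : fM M 0 = 0 := by
    unfold fM
    have : ∀ n : ℕ, (0:ℂ) ^ (n + 2) / (((n : ℂ) + 2) * ((n : ℂ) + 1)) = 0 := by
      intro n
      rw [zero_pow (by omega : n + 2 ≠ 0), zero_div]
    rw [tsum_congr this, tsum_zero]
    ring
  unfold bdyDist
  have hcongr : ∀ᶠ z in (Filter.comap (fun z : ℂ => ‖z‖)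
      (nhdsWithin 1 (Set.Iio 1))),
      ‖fM M z - fM M 0‖ = ‖Gfun M z‖ := by
    have hmem : {z : ℂ | ‖z‖ < 1} ∈ (Filter.comap (fun z : ℂ => ‖z‖)
        (nhdsWithin 1 (Set.Iio 1))) :=
      Filter.preimage_mem_comap self_mem_nhdsWithin
    filter_upwards [hmem] with z hz
    rw [hfM0, sub_zero, fM_eq_Gfun M (by simpa using hz)]
  rw [Filter.liminf_congr hcongr]
  exact liminf_Gfun M hM hD
end
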